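/- Let G be a topological abelian group and ω: G → 𝕋 a quasi-character (ω(0) = 1 and the map (x,y) ↦ ω(x+y)·ω(x)⁻¹·ω(y)⁻¹ is continuous at (0,0)). Suppose there exist a neighborhood U of 0 in G and β ∈ (0, 1/3) with ω(U) ⊆ T_β. Then ω is continuous at 0, i.e., for every ε > 0 there is a neighborhood V of 0 with ω(V) ⊆ T_ε. -/

import Mathlib

noncomputable section

/-- The circle group `𝕋 = ℝ/ℤ`. -/
abbrev 𝕋 := AddCircle (1 : ℝ)

instance : Fact ((0 : ℝ) < 1) := ⟨one_pos⟩

/-- `⟨t⟩`: the unique representative of `t` in the interval `(-1/2, 1/2]`. -/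
def torusArg (t : 𝕋) : ℝ := (AddCircle.equivIoc 1 (-(1/2)) t : ℝ)

/-- `θ(t) = |⟨t⟩|`, the norm of `t ∈ 𝕋`. -/
def torusNorm (t : 𝕋) : ℝ := |torusArg t|

/-- `T_β = {t ∈ 𝕋 : θ(t) ≤ β}`. -/
def Tset (β : ℝ) : Set 𝕋 := {t | torusNorm t ≤ β}

lemma coe_torusArg (t : 𝕋) : (↑(torusArg t) : 𝕋) = t :=
  (AddCircle.equivIoc 1 (-(1/2))).symm_apply_apply t

lemma abs_torusArg_le (t : 𝕋) : |torusArg t| ≤ 1/2 := by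
  have h := (AddCircle.equivIoc 1 (-(1/2)) t).2
  simp only [Set.mem_Ioc] at h
  have h1 : -(1/2) < torusArg t := h.1
  have h2 : torusArg t ≤ -(1/2) + 1 := h.2
  rw [abs_le]; constructor <;> linarith

lemma norm_coe_of_abs_le {x : ℝ} (h : |x| ≤ 1/2) : ‖(x : 𝕋)‖ = |x| := by
  rw [AddCircle.norm_coe_eq_abs_iff 1 one_ne_zero]; simpa using h

lemma norm_eq_torusNorm (t : 𝕋) : ‖t‖ = torusNorm t := by
  calc ‖t‖ = ‖((torusArg t : ℝ) : 𝕋)‖ := by rw [coe_torusArg]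
  _ = |torusArg t| := norm_coe_of_abs_le (abs_torusArg_le t)

/-- The halving lemma: if `‖t‖ ≤ β < 1/3` and `‖t + t‖ ≤ c < 1 - 2β`, then `‖t‖ ≤ c/2`. -/
lemma halving {t : 𝕋} {β c : ℝ} (hβ : β < 1/3) (h1 : ‖t‖ ≤ β) (h2 : ‖t + t‖ ≤ c)
    (h3 : c < 1 - 2*β) : ‖t‖ ≤ c / 2 := by
  obtain ⟨a, hmem, rfl⟩ : ∃ a : ℝ, |a| ≤ 1/2 ∧ (a : 𝕋) = t :=
    ⟨torusArg t, abs_torusArg_le t, coe_torusArg t⟩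
  rw [norm_coe_of_abs_le hmem] at h1 ⊢
  have hco : ((a : ℝ) : 𝕋) + a = ((a + a : ℝ) : 𝕋) := by norm_cast
  rw [hco] at h2
  have habs2 : |a + a| = 2 * |a| := by
    rw [show a + a = 2 * a by ring, abs_mul, abs_two]
  rcases le_or_gt (|a + a|) (1/2) with h | h
  · rw [norm_coe_of_abs_le h, habs2] at h2
    linarith
  · exfalso
    have hb2 : |a + a| ≤ 2 * β := by rw [habs2]; linarith
    have hn : (1 : ℝ) - |a + a| ≤ ‖((a + a : ℝ) : 𝕋)‖ := by
      rw [AddCircle.norm_eq]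
      simp only [inv_one, one_mul, mul_one]
      rcases eq_or_ne (round (a + a)) 0 with hr | hr
      · rw [hr]; simp only [Int.cast_zero, sub_zero]; linarith
      · have hone : (1 : ℝ) ≤ |((round (a + a) : ℤ) : ℝ)| := by
          exact_mod_cast Int.one_le_abs hr
        have habsle := abs_sub_abs_le_abs_sub ((round (a + a) : ℤ) : ℝ) (a + a)
        rw [abs_sub_comm] at habsle
        linarith
    linarith

theorem stmt8 {G : Type*} [AddCommGroup G] [TopologicalSpace G] [IsTopologicalAddGroup G]
    (ω : G → 𝕋) (hω0 : ω 0 = 0)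
    (hq : ContinuousAt (fun p : G × G => ω (p.1 + p.2) - ω p.1 - ω p.2) (0, 0))
    (U : Set G) (hU : U ∈ nhds (0 : G)) (β : ℝ) (hβ : β ∈ Set.Ioo (0 : ℝ) (1/3))
    (hωU : ∀ u ∈ U, ω u ∈ Tset β) :
    ∀ ε > (0 : ℝ), ∃ V ∈ nhds (0 : G), ∀ v ∈ V, ω v ∈ Tset ε := by
  intro ε hε
  obtain ⟨hβ0, hβ3⟩ := hβ
  set ρ := min (ε/2) (min ((1-3*β)/2) β) with hρdef
  have hρpos : 0 < ρ := lt_min (by linarith) (lt_min (by linarith) hβ0)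
  have hρε : ρ ≤ ε/2 := min_le_left _ _
  have hρβ : ρ ≤ β := le_trans (min_le_right _ _) (min_le_right _ _)
  have hρ3 : ρ < 1 - 3*β :=
    lt_of_le_of_lt (le_trans (min_le_right _ _) (min_le_left _ _)) (by linarith)
  -- obtain the neighborhood W from quasi-character continuity
  have h0 : (fun p : G × G => ω (p.1 + p.2) - ω p.1 - ω p.2) (0, 0) = 0 := by
    simp [hω0]
  have hball : Metric.ball (0 : 𝕋) ρ ∈
      nhds ((fun p : G × G => ω (p.1 + p.2) - ω p.1 - ω p.2) (0, 0)) := by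
    rw [h0]; exact Metric.ball_mem_nhds _ hρpos
  have hpre := hq hball
  obtain ⟨A, hA, B, hB, hsub⟩ := mem_nhds_prod_iff.mp hpre
  set W := A ∩ B with hWdef
  have hW : W ∈ nhds (0 : G) := Filter.inter_mem hA hB
  have hWprop : ∀ x ∈ W, ‖ω (x + x) - ω x - ω x‖ < ρ := by
    intro x hx
    have hm : (x, x) ∈ A ×ˢ B := Set.mk_mem_prod hx.1 hx.2
    have := hsub hm
    simpa [Metric.mem_ball, dist_zero_right] using this
  -- the doubling map is continuous
  have hdbl : Filter.Tendsto (fun x : G => x + x) (nhds 0) (nhds 0) := by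
    have hc : Continuous fun x : G => x + x := continuous_id.add continuous_id
    simpa using hc.tendsto (0 : G)
  -- the inductive shrinking
  have key : ∀ n : ℕ, ∃ V ∈ nhds (0 : G), ∀ v ∈ V, ‖ω v‖ ≤ ρ + (β - ρ) / 2 ^ n := by
    intro n
    induction n with
    | zero =>
      refine ⟨U, hU, fun v hv => ?_⟩
      have := hωU v hv
      rw [Tset, Set.mem_setOf_eq] at this
      rw [norm_eq_torusNorm]
      simpa using this
    | succ n ih =>
      obtain ⟨V, hV, hVb⟩ := ih
      refine ⟨W ∩ V ∩ (fun x : G => x + x) ⁻¹' V,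
        Filter.inter_mem (Filter.inter_mem hW hV) (hdbl hV), fun x hx => ?_⟩
      obtain ⟨⟨hxW, hxV⟩, hx2V⟩ := hx
      set b := ρ + (β - ρ) / 2 ^ n with hbdef
      have hbβ : b ≤ β := by
        have h1 : (β - ρ) / 2 ^ n ≤ β - ρ :=
          div_le_self (by linarith) (one_le_pow₀ (by norm_num))
        rw [hbdef]; linarith
      have h1 : ‖ω x‖ ≤ b := hVb x hxV
      have h2 : ‖ω (x + x)‖ ≤ b := hVb _ hx2V
      have h3 : ‖ω (x + x) - ω x - ω x‖ < ρ := hWprop x hxW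
      have h4 : ‖ω x + ω x‖ ≤ b + ρ := by
        have he : ω x + ω x = ω (x + x) - (ω (x + x) - ω x - ω x) := by abel
        rw [he]
        exact (norm_sub_le _ _).trans (by linarith)
      have h5 : ‖ω x‖ ≤ (b + ρ) / 2 :=
        halving hβ3 (h1.trans hbβ) h4 (by linarith)
      have heq : (b + ρ) / 2 = ρ + (β - ρ) / 2 ^ (n + 1) := by
        rw [hbdef, pow_succ]
        field_simp
        ring
      linarith [heq ▸ h5]
  -- choose n so that the bound gets below ε
  obtain ⟨n, hn⟩ := pow_unbounded_of_one_lt ((β - ρ) / (ε / 2)) (by norm_num : (1:ℝ) < 2)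
  have h2n : (0 : ℝ) < 2 ^ n := pow_pos two_pos n
  have hsmall : (β - ρ) / 2 ^ n < ε / 2 := by
    rw [div_lt_iff₀ h2n]
    rw [div_lt_iff₀ (by linarith : (0:ℝ) < ε/2)] at hn
    linarith
  obtain ⟨V, hV, hVb⟩ := key n
  refine ⟨V, hV, fun v hv => ?_⟩
  rw [Tset, Set.mem_setOf_eq, ← norm_eq_torusNorm]
  have := hVb v hv
  linarith
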